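/- Let l(x) = ((max(1+x,0))² − 1)/2 and c(x,y) = (x−y)². Then for λ > 1/2 one has l^{λc}(x) := sup_y ( l(y) − λ(x−y)² ) = (2λ/(2λ−1))·l(x) + 1/(4λ−2) for every x ∈ ℝ, and for 0 ≤ λ < 1/2 one has l^{λc}(x) = ∞ for every x. -/

import Mathlib

open MeasureTheory Set Filter Topology

/-- for `l(x) = ((max(1+x,0))² − 1)/2` and `c(x,y) = (x−y)²`: if `λ > 1/2` then
`l^{λc}(x) = (2λ/(2λ−1))·l(x) + 1/(4λ−2)` for all `x`, and if `0 ≤ λ < 1/2` then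
`l^{λc}(x) = ∞` for all `x`. -/
theorem lambda_c_transform_monotone_mean_variance (lam : ℝ) :
    (1 / 2 < lam → ∀ x : ℝ,
      (⨆ y : ℝ, ((((max (1 + y) 0) ^ 2 - 1) / 2 - lam * (x - y) ^ 2 : ℝ) : EReal))
        = (((2 * lam / (2 * lam - 1)) * (((max (1 + x) 0) ^ 2 - 1) / 2)
            + 1 / (4 * lam - 2) : ℝ) : EReal)) ∧
    (0 ≤ lam → lam < 1 / 2 → ∀ x : ℝ,
      (⨆ y : ℝ, ((((max (1 + y) 0) ^ 2 - 1) / 2 - lam * (x - y) ^ 2 : ℝ) : EReal))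
        = (⊤ : EReal)) := by
  constructor
  · intro hlam x
    have h2l : (0:ℝ) < 2 * lam - 1 := by linarith
    have hne : (2 * lam - 1 : ℝ) ≠ 0 := ne_of_gt h2l
    have hne4 : (4 * lam - 2 : ℝ) ≠ 0 := by intro h; apply hne; linarith
    have hM : (2 * lam / (2 * lam - 1)) * (((max (1 + x) 0) ^ 2 - 1) / 2)
        + 1 / (4 * lam - 2)
        = (2 * lam * ((max (1 + x) 0) ^ 2 - 1) + 1) / (2 * (2 * lam - 1)) := by
      rw [show (4 * lam - 2 : ℝ) = 2 * (2 * lam - 1) by ring]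
      field_simp
    apply le_antisymm
    · apply iSup_le
      intro y
      rw [EReal.coe_le_coe_iff, hM, le_div_iff₀ (by linarith : (0:ℝ) < 2 * (2 * lam - 1))]
      have hx0 : (0:ℝ) ≤ max (1 + x) 0 := le_max_right _ _
      rcases le_or_gt (1 + y) 0 with hy | hy
      · rw [max_eq_right hy]
        nlinarith [sq_nonneg (max (1 + x) 0), sq_nonneg (x - y),
          mul_nonneg (le_of_lt (by linarith : (0:ℝ) < lam)) (sq_nonneg (x - y))]
      · rw [max_eq_left hy.le]
        rcases le_or_gt (1 + x) 0 with hx | hx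
        · rw [max_eq_right hx]
          have h1 : (1 + y) ≤ y - x := by linarith
          have h2 : (1 + y) ^ 2 ≤ (y - x) ^ 2 := by nlinarith
          nlinarith [mul_le_mul_of_nonneg_left h2 (le_of_lt h2l),
            mul_nonneg (mul_nonneg (le_of_lt h2l) (le_of_lt h2l)) (sq_nonneg (x - y))]
        · rw [max_eq_left hx.le]
          nlinarith [sq_nonneg ((2 * lam - 1) * y - (1 + 2 * lam * x))]
    · rcases le_or_gt (1 + x) 0 with hx | hx
      · refine le_trans ?_ (le_iSup (fun y : ℝ =>
          ((((max (1 + y) 0) ^ 2 - 1) / 2 - lam * (x - y) ^ 2 : ℝ) : EReal)) x)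
        rw [EReal.coe_le_coe_iff, hM, max_eq_right hx]
        rw [div_le_iff₀ (by linarith : (0:ℝ) < 2 * (2 * lam - 1))]
        ring_nf
        nlinarith [sq_nonneg (x - x)]
      · set y0 : ℝ := (1 + 2 * lam * x) / (2 * lam - 1) with hy0
        refine le_trans ?_ (le_iSup (fun y : ℝ =>
          ((((max (1 + y) 0) ^ 2 - 1) / 2 - lam * (x - y) ^ 2 : ℝ) : EReal)) y0)
        rw [EReal.coe_le_coe_iff]
        have hkey : 1 + y0 = 2 * lam * (1 + x) / (2 * lam - 1) := by
          rw [hy0]; field_simp; ring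
        have hy0pos : 0 ≤ 1 + y0 := by
          rw [hkey]
          apply div_nonneg _ (le_of_lt h2l)
          nlinarith
        rw [max_eq_left hy0pos, max_eq_left hx.le, hkey, hy0]
        apply le_of_eq
        rw [show (4 * lam - 2 : ℝ) = 2 * (2 * lam - 1) by ring]
        field_simp
        ring
  · intro h0 hl x
    rw [iSup_eq_top]
    intro b hb
    obtain ⟨r, hbr, -⟩ := EReal.exists_between_coe_real hb
    have hεpos : (0:ℝ) < 1 / 2 - lam := by linarith
    obtain ⟨t, ht1, ht3⟩ : ∃ t : ℝ, 1 ≤ t ∧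
        |1 + 2 * lam * x| + |lam * x ^ 2| + |r| + 1 ≤ (1 / 2 - lam) * t := by
      refine ⟨max 1 ((|1 + 2 * lam * x| + |lam * x ^ 2| + |r| + 1) / (1 / 2 - lam)),
        le_max_left _ _, ?_⟩
      have h := le_max_right (1:ℝ)
        ((|1 + 2 * lam * x| + |lam * x ^ 2| + |r| + 1) / (1 / 2 - lam))
      have h2 := mul_le_mul_of_nonneg_left h hεpos.le
      rw [mul_div_cancel₀ _ (ne_of_gt hεpos)] at h2
      exact h2
    refine ⟨t, lt_trans hbr ?_⟩
    rw [EReal.coe_lt_coe_iff]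
    have hmax : max (1 + t) 0 = 1 + t := max_eq_left (by linarith)
    rw [hmax]
    have htpos : (0:ℝ) < t := by linarith
    have hA1 : -|1 + 2 * lam * x| ≤ 1 + 2 * lam * x := neg_abs_le _
    have hB2 : lam * x ^ 2 ≤ |lam * x ^ 2| := le_abs_self _
    have hr2 : r ≤ |r| := le_abs_self r
    have hid : ((1 + t) ^ 2 - 1) / 2 - lam * (x - t) ^ 2
        = (1 / 2 - lam) * t ^ 2 + (1 + 2 * lam * x) * t - lam * x ^ 2 := by ring
    have k1 : (|1 + 2 * lam * x| + |lam * x ^ 2| + |r| + 1) * t ≤ (1 / 2 - lam) * t ^ 2 := by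
      have := mul_le_mul_of_nonneg_right ht3 htpos.le
      nlinarith [this]
    have k2 : 0 ≤ ((1 + 2 * lam * x) + |1 + 2 * lam * x|) * t :=
      mul_nonneg (by linarith) htpos.le
    have k3 : 0 ≤ (|lam * x ^ 2| + |r| + 1) * (t - 1) :=
      mul_nonneg (by positivity) (by linarith)
    rw [hid]
    nlinarith [k1, k2, k3]
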